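/- The abstraction [𝕍]X := (𝕍 × X)/∼α of a nominal set X, with the action π·⟨v⟩x := ⟨π(v)⟩(π·x), is a well-defined nominal set: the action respects α-equivalence classes and every class ⟨v⟩x is finitely supported, with supp(⟨v⟩x) = supp(x) ∖ {v}. -/

import Mathlib

open Pointwise

/-- The subgroup of finite permutations of the atoms `ℕ`. -/
def FinPerm : Subgroup (Equiv.Perm ℕ) where
  carrier := {π | {v | π v ≠ v}.Finite}
  one_mem' := by simp
  mul_mem' := by
    intro a b ha hb
    refine (ha.union hb).subset ?_
    intro v hv
    simp only [Set.mem_setOf_eq, Equiv.Perm.mul_apply] at hv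
    by_contra h
    simp only [Set.mem_union, Set.mem_setOf_eq, not_or, not_not] at h
    rw [h.2] at hv
    exact hv h.1
  inv_mem' := by
    intro a ha
    refine ha.subset ?_
    intro v hv
    simp only [Set.mem_setOf_eq] at hv ⊢
    intro h
    exact hv (by conv_lhs => rw [← h, Equiv.Perm.inv_def, Equiv.symm_apply_apply])


/-- Equivariant maps between `FinPerm`-sets. -/
def Equivariant {X Y : Type*} [MulAction FinPerm X] [MulAction FinPerm Y] (f : X → Y) : Prop :=
  ∀ (π : FinPerm) (x : X), f (π • x) = π • f x

/-- A finite set of atoms supports an element. -/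
def Supports {X : Type*} [MulAction FinPerm X] (S : Finset ℕ) (x : X) : Prop :=
  ∀ π : FinPerm, (∀ v ∈ S, π • v = v) → π • x = x

/-- A nominal set: a `FinPerm`-set with a least finite support function. -/
class NominalSet (X : Type*) [MulAction FinPerm X] where
  supp : X → Finset ℕ
  supports_supp : ∀ x : X, Supports (supp x) x
  supp_least : ∀ (x : X) (S : Finset ℕ), Supports S x → supp x ⊆ S

open NominalSet

/-- The transposition `(a b)` as a finite permutation. -/
def swapPerm (a b : ℕ) : FinPerm :=
  ⟨Equiv.swap a b, by
    show {v | Equiv.swap a b v ≠ v}.Finite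
    refine ((Set.finite_singleton b).insert a).subset ?_
    intro v hv
    simp only [Set.mem_setOf_eq] at hv
    by_contra h
    simp only [Set.mem_insert_iff, Set.mem_singleton_iff, not_or] at h
    exact hv (Equiv.swap_apply_of_ne_of_ne h.1 h.2)⟩

/-- α-equivalence on `ℕ × X`: `(v₁,x₁) ∼α (v₂,x₂)` iff some `z` fresh for `v₁, v₂, x₁, x₂`
satisfies `(v₁ z)·x₁ = (v₂ z)·x₂`. -/
def alphaEq {X : Type*} [MulAction FinPerm X] [NominalSet X] (p q : ℕ × X) : Prop :=
  ∃ z : ℕ, z ≠ p.1 ∧ z ≠ q.1 ∧ z ∉ supp p.2 ∧ z ∉ supp q.2 ∧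
    swapPerm p.1 z • p.2 = swapPerm q.1 z • q.2

/-- A finite set `S` of atoms supports the abstraction `⟨v⟩x` (represented by the pair
`(v, x)`) if every permutation fixing `S` pointwise maps `(v,x)` to an α-equivalent pair. -/
def SupportsAbs {X : Type*} [MulAction FinPerm X] [NominalSet X]
    (S : Finset ℕ) (p : ℕ × X) : Prop :=
  ∀ π : FinPerm, (∀ v ∈ S, π • v = v) → alphaEq (π • p.1, π • p.2) p

section Helpers

set_option linter.unusedSectionVars false

variable {X : Type*} [MulAction FinPerm X] [NominalSet X]

lemma finPerm_smul_nat (π : FinPerm) (v : ℕ) : π • v = (π : Equiv.Perm ℕ) v := rfl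

@[simp] lemma swapPerm_coe (a b : ℕ) : (swapPerm a b : Equiv.Perm ℕ) = Equiv.swap a b := rfl

@[simp] lemma swapPerm_smul_nat (a b v : ℕ) : swapPerm a b • v = Equiv.swap a b v := rfl

lemma swapPerm_inv (a b : ℕ) : (swapPerm a b)⁻¹ = swapPerm a b := by
  ext v
  simp [Equiv.swap_inv]

lemma swapPerm_self (a : ℕ) : swapPerm a a = 1 := by
  ext v
  simp

lemma swapPerm_swapPerm (a b : ℕ) (x : X) : swapPerm a b • swapPerm a b • x = x := by
  rw [← mul_smul]
  have : swapPerm a b * swapPerm a b = 1 := by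
    ext v; simp
  rw [this, one_smul]

lemma finPerm_smul_injective (π : FinPerm) : Function.Injective (fun v : ℕ => π • v) := by
  intro a b h
  simpa [finPerm_smul_nat] using h

lemma swapPerm_conj (π : FinPerm) (a b : ℕ) :
    swapPerm (π • a) (π • b) = π * swapPerm a b * π⁻¹ := by
  ext v
  simp only [swapPerm_coe, finPerm_smul_nat]
  rw [Equiv.swap_apply_apply]
  rfl

lemma swap_smul_comm (π : FinPerm) (a b : ℕ) (x : X) :
    swapPerm (π • a) (π • b) • (π • x) = π • (swapPerm a b • x) := by
  rw [swapPerm_conj, mul_smul, mul_smul, inv_smul_smul]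

lemma supports_smul {S : Finset ℕ} {x : X} (h : Supports S x) (π : FinPerm) :
    Supports (π • S) (π • x) := by
  intro σ hσ
  have h1 : (π⁻¹ * σ * π) • x = x := by
    apply h
    intro v hv
    have : σ • (π • v) = π • v := hσ _ (Finset.smul_mem_smul_finset hv)
    calc (π⁻¹ * σ * π) • v = π⁻¹ • σ • π • v := by rw [mul_smul, mul_smul]
    _ = π⁻¹ • π • v := by rw [this]
    _ = v := inv_smul_smul _ _
  have := congrArg (fun y => π • y) h1
  simpa [mul_smul] using this

lemma supp_smul (π : FinPerm) (x : X) : supp (π • x) = π • supp x := by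
  apply subset_antisymm
  · exact supp_least _ _ (supports_smul (supports_supp x) π)
  · have h : supp x ⊆ π⁻¹ • supp (π • x) := by
      have := supports_smul (supports_supp (π • x)) π⁻¹
      rw [inv_smul_smul] at this
      exact supp_least _ _ this
    calc π • supp x ⊆ π • (π⁻¹ • supp (π • x)) := Finset.smul_finset_subset_smul_finset h
    _ = supp (π • x) := smul_inv_smul _ _

lemma mem_supp_smul_iff (π : FinPerm) (x : X) (a : ℕ) :
    π • a ∈ supp (π • x) ↔ a ∈ supp x := by
  rw [supp_smul]
  exact Finset.smul_mem_smul_finset_iff π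

lemma fresh_swap_fix {a b : ℕ} {x : X} (ha : a ∉ supp x) (hb : b ∉ supp x) :
    swapPerm a b • x = x := by
  apply supports_supp x
  intro v hv
  simp only [swapPerm_smul_nat]
  exact Equiv.swap_apply_of_ne_of_ne (fun h => ha (h ▸ hv)) (fun h => hb (h ▸ hv))

lemma swap_indep {v z z' : ℕ} {x : X} (hvz : v ≠ z) (hvz' : v ≠ z')
    (hz : z ∉ supp x) (hz' : z' ∉ supp x) :
    swapPerm v z' • x = swapPerm z z' • swapPerm v z • x := by
  by_cases hzz' : z = z'
  · subst hzz'
    rw [swapPerm_self, one_smul]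
  · have hfix : swapPerm z z' • x = x := fresh_swap_fix hz hz'
    conv_rhs => rw [← hfix, ← mul_smul, ← mul_smul]
    congr 1
    ext w
    simp only [swapPerm_coe, Subgroup.coe_mul, Equiv.Perm.coe_mul, Function.comp_apply]
    have : Equiv.swap v z' = Equiv.swap (Equiv.swap z z' v) (Equiv.swap z z' z) := by
      rw [Equiv.swap_apply_of_ne_of_ne hvz hvz', Equiv.swap_apply_left]
    rw [this, Equiv.swap_apply_apply]
    simp [Equiv.swap_inv]

lemma exists_fresh (A : Finset ℕ) : ∃ a : ℕ, a ∉ A := Infinite.exists_notMem_finset A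

end Helpers

/-- The abstraction `[𝕍]X = (ℕ × X)/∼α` with action `π·⟨v⟩x = ⟨π v⟩(π·x)` is a
well-defined nominal set: the action respects α-classes, and the least support of the
class `⟨v⟩x` is `supp x \ {v}`. -/
theorem abstraction_nominal {X : Type*} [MulAction FinPerm X] [NominalSet X] :
    (∀ (π : FinPerm) (p q : ℕ × X), alphaEq p q →
        alphaEq (π • p.1, π • p.2) (π • q.1, π • q.2)) ∧
    (∀ (v : ℕ) (x : X),
        SupportsAbs (supp x \ {v}) (v, x) ∧
        ∀ S : Finset ℕ, SupportsAbs S (v, x) → supp x \ {v} ⊆ S) := by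
  constructor
  · -- equivariance of alphaEq
    rintro π ⟨v₁, x₁⟩ ⟨v₂, x₂⟩ ⟨z, hz1, hz2, hz3, hz4, heq⟩
    dsimp only at hz1 hz2 hz3 hz4 heq ⊢
    obtain ⟨z', hz'⟩ := exists_fresh
      (supp (π • x₁) ∪ supp (π • x₂) ∪ {π • v₁, π • v₂})
    simp only [Finset.mem_union, Finset.mem_insert, Finset.mem_singleton, not_or] at hz'
    obtain ⟨⟨hz'1, hz'2⟩, hz'3, hz'4⟩ := hz'
    refine ⟨z', hz'3, hz'4, hz'1, hz'2, ?_⟩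
    have hπz1 : π • z ∉ supp (π • x₁) := fun h => hz3 ((mem_supp_smul_iff π x₁ z).mp h)
    have hπz2 : π • z ∉ supp (π • x₂) := fun h => hz4 ((mem_supp_smul_iff π x₂ z).mp h)
    have hne1 : π • v₁ ≠ π • z := fun h => hz1 (finPerm_smul_injective π h).symm
    have hne2 : π • v₂ ≠ π • z := fun h => hz2 (finPerm_smul_injective π h).symm
    calc swapPerm (π • v₁) z' • (π • x₁)
        = swapPerm (π • z) z' • swapPerm (π • v₁) (π • z) • (π • x₁) :=
          swap_indep hne1 (Ne.symm hz'3) hπz1 hz'1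
      _ = swapPerm (π • z) z' • (π • (swapPerm v₁ z • x₁)) := by rw [swap_smul_comm]
      _ = swapPerm (π • z) z' • (π • (swapPerm v₂ z • x₂)) := by rw [heq]
      _ = swapPerm (π • z) z' • swapPerm (π • v₂) (π • z) • (π • x₂) := by rw [swap_smul_comm]
      _ = swapPerm (π • v₂) z' • (π • x₂) :=
          (swap_indep hne2 (Ne.symm hz'4) hπz2 hz'2).symm
  · intro v x
    constructor
    · -- supp x \ {v} supports (v, x)
      intro π hπ
      dsimp only
      obtain ⟨z, hz⟩ := exists_fresh (supp x ∪ supp (π • x) ∪ {v, π • v})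
      simp only [Finset.mem_union, Finset.mem_insert, Finset.mem_singleton, not_or] at hz
      obtain ⟨⟨hz1, hz2⟩, hz3, hz4⟩ := hz
      refine ⟨z, hz4, hz3, hz2, hz1, ?_⟩
      show swapPerm (π • v) z • (π • x) = swapPerm v z • x
      have key : (swapPerm v z * swapPerm (π • v) z * π) • x = x := by
        apply supports_supp x
        intro w hw
        have hwz : w ≠ z := fun h => hz1 (h ▸ hw)
        rw [mul_smul, mul_smul]
        by_cases hwv : w = v
        · subst hwv
          simp only [finPerm_smul_nat, swapPerm_smul_nat, swapPerm_coe]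
          rw [show Equiv.swap ((π : Equiv.Perm ℕ) w) z ((π : Equiv.Perm ℕ) w)
              = z from Equiv.swap_apply_left _ _]
          exact Equiv.swap_apply_right w z
        · have hπw : π • w = w := hπ w (Finset.mem_sdiff.mpr ⟨hw, by simpa using hwv⟩)
          have hwπv : w ≠ π • v := by
            intro h
            exact hwv (finPerm_smul_injective π (hπw.trans h))
          rw [hπw]
          simp only [swapPerm_smul_nat]
          rw [Equiv.swap_apply_of_ne_of_ne (by simpa using hwπv) hwz,
            Equiv.swap_apply_of_ne_of_ne hwv hwz]
      rw [mul_smul, mul_smul] at key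
      calc swapPerm (π • v) z • (π • x)
          = swapPerm v z • swapPerm v z • swapPerm (π • v) z • (π • x) :=
            (swapPerm_swapPerm v z _).symm
        _ = swapPerm v z • x := by rw [key]
    · -- least support
      intro S hS a ha
      rw [Finset.mem_sdiff, Finset.mem_singleton] at ha
      obtain ⟨hax, hav⟩ := ha
      by_contra haS
      obtain ⟨b, hb⟩ := exists_fresh (supp x ∪ S ∪ {v, a})
      simp only [Finset.mem_union, Finset.mem_insert, Finset.mem_singleton, not_or] at hb
      obtain ⟨⟨hb1, hb2⟩, hb3, hb4⟩ := hb
      have hfix : ∀ w ∈ S, swapPerm a b • w = w := by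
        intro w hw
        simp only [swapPerm_smul_nat]
        exact Equiv.swap_apply_of_ne_of_ne (fun h => haS (h ▸ hw)) (fun h => hb2 (h ▸ hw))
      obtain ⟨z, hz1, hz2, hz3, hz4, heq⟩ := hS (swapPerm a b) hfix
      dsimp only at hz1 hz2 hz3 hz4 heq
      have hπv : swapPerm a b • v = v := by
        simp only [swapPerm_smul_nat]
        exact Equiv.swap_apply_of_ne_of_ne (Ne.symm hav) (Ne.symm hb3)
      rw [hπv] at heq hz1
      have hxx : swapPerm a b • x = x := by
        have := congrArg (fun y => swapPerm v z • y) heq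
        simpa [swapPerm_swapPerm] using this
      have : swapPerm a b • a ∈ supp (swapPerm a b • x) := by
        rw [mem_supp_smul_iff]; exact hax
      rw [hxx] at this
      simp only [swapPerm_smul_nat, Equiv.swap_apply_left] at this
      exact hb1 this
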